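/- The n-pod T_n (n ≥ 3 half-lines glued at a common origin) is flexible: δ(T_n, 0) = 0. That is, for every finite configuration of nonzero points v_1,...,v_m ∈ T_n with positive weights t_1,...,t_m summing to 1 whose barycenter is the origin, there exist vectors 𝐯_1,...,𝐯_m ∈ ℝ² with ‖𝐯_i‖ = |v_i|, ‖𝐯_i − 𝐯_j‖ ≤ d(v_i,v_j), and Σ t_i 𝐯_i = 0. -/

import Mathlib

open Filter Metric Set Topology


noncomputable def vec2 (x y : ℝ) : EuclideanSpace ℝ (Fin 2) :=
  (WithLp.equiv 2 (Fin 2 → ℝ)).symm ![x, y]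

lemma vec2_norm (x y : ℝ) (h : x^2 + y^2 = 1) : ‖vec2 x y‖ = 1 := by
  rw [EuclideanSpace.norm_eq]
  simp only [vec2, WithLp.equiv_symm_apply, PiLp.toLp_apply, WithLp.ofLp_toLp, Real.norm_eq_abs, sq_abs, Fin.sum_univ_two,
    Matrix.cons_val_zero, Matrix.cons_val_one, Matrix.head_cons]
  rw [h, Real.sqrt_one]

lemma vec2_comb (p a b q c d r e f : ℝ) :
    p • vec2 a b + q • vec2 c d + r • vec2 e f
      = vec2 (p*a+q*c+r*e) (p*b+q*d+r*f) := by
  ext i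
  fin_cases i <;>
    simp [vec2, PiLp.add_apply, PiLp.smul_apply, WithLp.equiv_symm_apply, PiLp.toLp_apply]

lemma vec2_zero : vec2 0 0 = 0 := by
  ext i; fin_cases i <;> simp [vec2]

lemma triangle_vectors (p q r : ℝ) (hp : 0 ≤ p) (hq : 0 ≤ q) (hr : 0 ≤ r)
    (h1 : p ≤ q + r) (h2 : q ≤ p + r) (h3 : r ≤ p + q) :
    ∃ e₁ e₂ e₃ : EuclideanSpace ℝ (Fin 2), ‖e₁‖ = 1 ∧ ‖e₂‖ = 1 ∧ ‖e₃‖ = 1 ∧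
      p • e₁ + q • e₂ + r • e₃ = 0 := by
  have unit : (1:ℝ)^2 + 0^2 = 1 := by norm_num
  rcases eq_or_lt_of_le hp with hp0 | hp0
  · -- p = 0, so q = r
    have hqr : q = r := le_antisymm (by linarith) (by linarith)
    exact ⟨vec2 1 0, vec2 1 0, vec2 (-1) 0, vec2_norm _ _ unit, vec2_norm _ _ unit,
      vec2_norm _ _ (by norm_num), by
        rw [vec2_comb, show p * 1 + q * 1 + r * -1 = 0 by linarith,
          show p * 0 + q * 0 + r * 0 = 0 by ring, vec2_zero]⟩
  rcases eq_or_lt_of_le hq with hq0 | hq0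
  · have hpr : p = r := le_antisymm (by linarith) (by linarith)
    exact ⟨vec2 1 0, vec2 1 0, vec2 (-1) 0, vec2_norm _ _ unit, vec2_norm _ _ unit,
      vec2_norm _ _ (by norm_num), by
        rw [vec2_comb, show p * 1 + q * 1 + r * -1 = 0 by linarith,
          show p * 0 + q * 0 + r * 0 = 0 by ring, vec2_zero]⟩
  rcases eq_or_lt_of_le hr with hr0 | hr0
  · have hpq : p = q := le_antisymm (by linarith) (by linarith)
    exact ⟨vec2 1 0, vec2 (-1) 0, vec2 1 0, vec2_norm _ _ unit, vec2_norm _ _ (by norm_num),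
      vec2_norm _ _ unit, by
        rw [vec2_comb, show p * 1 + q * -1 + r * 1 = 0 by linarith,
          show p * 0 + q * 0 + r * 0 = 0 by ring, vec2_zero]⟩
  -- all positive
  set x2 : ℝ := (r^2 - p^2 - q^2)/(2*p*q) with hx2
  set x3 : ℝ := (q^2 - p^2 - r^2)/(2*p*r) with hx3
  have hx2sq : x2^2 ≤ 1 := by
    rw [hx2, div_pow, div_le_one (by positivity)]
    nlinarith [mul_nonneg (mul_nonneg (by linarith : (0:ℝ) ≤ r+p-q) (by linarith : (0:ℝ) ≤ r-p+q)) (mul_nonneg (by linarith : (0:ℝ) ≤ p+q-r) (by linarith : (0:ℝ) ≤ p+q+r))]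
  have hx3sq : x3^2 ≤ 1 := by
    rw [hx3, div_pow, div_le_one (by positivity)]
    nlinarith [mul_nonneg (mul_nonneg (by linarith : (0:ℝ) ≤ q+p-r) (by linarith : (0:ℝ) ≤ q-p+r)) (mul_nonneg (by linarith : (0:ℝ) ≤ p+r-q) (by linarith : (0:ℝ) ≤ p+r+q))]
  set y2 : ℝ := Real.sqrt (1 - x2^2) with hy2
  set y3 : ℝ := Real.sqrt (1 - x3^2) with hy3
  have hy2sq : y2^2 = 1 - x2^2 := Real.sq_sqrt (by linarith)
  have hy3sq : y3^2 = 1 - x3^2 := Real.sq_sqrt (by linarith)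
  have hy2n : 0 ≤ y2 := Real.sqrt_nonneg _
  have hy3n : 0 ≤ y3 := Real.sqrt_nonneg _
  refine ⟨vec2 1 0, vec2 x2 y2, vec2 x3 (-y3), vec2_norm _ _ unit,
    vec2_norm _ _ (by linarith), vec2_norm _ _ (by rw [neg_pow]; norm_num; linarith), ?_⟩
  rw [vec2_comb]
  have hc1 : p * 1 + q * x2 + r * x3 = 0 := by
    rw [hx2, hx3]; field_simp; ring
  have hsqeq : (q * y2)^2 = (r * y3)^2 := by
    rw [mul_pow, mul_pow, hy2sq, hy3sq, hx2, hx3]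
    field_simp; ring
  have hc2 : p * 0 + q * y2 + r * (-y3) = 0 := by
    have : q * y2 = r * y3 := by
      have h1' : q * y2 = Real.sqrt ((q*y2)^2) := (Real.sqrt_sq (by positivity)).symm
      rw [h1', hsqeq, Real.sqrt_sq (by positivity)]
    linarith
  rw [hc1, hc2, vec2_zero]

/-- The `n`-pod: points are encoded as pairs `(s, r)` with `s` the index of the
half-line and `r ≥ 0` the distance to the origin (all `(s, 0)` represent the origin).
Its path metric. -/
noncomputable def podDist {n : ℕ} (x y : Fin n × ℝ) : ℝ :=
  if x.1 = y.1 then |x.2 - y.2| else x.2 + y.2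

/-- The `n`-pod is flexible at the origin: every weighted configuration of nonzero
points with barycenter at the origin admits a planar realization with vanishing
weighted sum. -/
theorem stmt10 {n m : ℕ} (hn : 3 ≤ n) (v : Fin m → Fin n × ℝ) (t : Fin m → ℝ)
    (hv : ∀ i, 0 < (v i).2) (ht : ∀ i, 0 < t i) (hsum : ∑ i, t i = 1)
    (hbary : ∀ q : Fin n × ℝ, 0 ≤ q.2 →
      ∑ i, t i * (v i).2 ^ 2 ≤ ∑ i, t i * podDist (v i) q ^ 2) :
    ∃ w : Fin m → EuclideanSpace ℝ (Fin 2),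
      (∀ i, ‖w i‖ = (v i).2) ∧ (∀ i j, ‖w i - w j‖ ≤ podDist (v i) (v j)) ∧
      ∑ i, t i • w i = 0 := by
  classical
  have hm : 0 < m := by
    rcases Nat.eq_zero_or_pos m with h | h
    · subst h; simp at hsum
    · exact h
  haveI : Nonempty (Fin m) := ⟨⟨0, hm⟩⟩
  set A : ℝ := ∑ i, t i * (v i).2 with hA
  have hApos : 0 < A := by
    apply Finset.sum_pos (fun i _ => mul_pos (ht i) (hv i)) Finset.univ_nonempty
  set a : Fin n → ℝ := fun s => ∑ i ∈ Finset.univ.filter fun i => (v i).1 = s, t i * (v i).2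
    with ha
  have ha0 : ∀ s, 0 ≤ a s := fun s =>
    Finset.sum_nonneg fun i _ => le_of_lt (mul_pos (ht i) (hv i))
  have haA : ∑ s, a s = A := Finset.sum_fiberwise _ _ _
  have key : ∀ s : Fin n, 2 * a s ≤ A := by
    intro s
    by_contra hcon
    push_neg at hcon
    set r : ℝ := 2 * a s - A with hrdef
    have hr : 0 < r := by simp only [hrdef]; linarith
    have hb := hbary (s, r) (le_of_lt hr)
    have expand : ∑ i, t i * podDist (v i) (s, r) ^ 2
        = (∑ i, t i * (v i).2 ^ 2) + r^2 * (∑ i, t i)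
          - 2 * r * (∑ i, (if (v i).1 = s then t i * (v i).2 else -(t i * (v i).2))) := by
      rw [Finset.mul_sum, Finset.mul_sum, ← Finset.sum_add_distrib, ← Finset.sum_sub_distrib]
      apply Finset.sum_congr rfl
      intro i _
      by_cases h : (v i).1 = s
      · simp only [podDist, h, if_pos, if_true]
        rw [sq_abs]; ring
      · simp only [podDist, h, if_false, if_neg, ite_false]
        ring
    have hsplit : (∑ i, (if (v i).1 = s then t i * (v i).2 else -(t i * (v i).2)))
        = 2 * a s - A := by
      rw [Finset.sum_ite, Finset.sum_neg_distrib]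
      have := Finset.sum_filter_add_sum_filter_not Finset.univ
        (fun i => (v i).1 = s) (fun i => t i * (v i).2)
      simp only [ha]
      linarith [this]
    rw [expand, hsplit, hsum, ← hrdef] at hb
    nlinarith [hb, hr]
  -- partial sums along the legs
  set P : ℕ → ℝ := fun k => ∑ s ∈ Finset.univ.filter fun s : Fin n => (s : ℕ) < k, a s with hP
  have hPn : P n = A := by
    rw [hP, ← haA]
    apply Finset.sum_congr _ (fun _ _ => rfl)
    ext s; simp [s.isLt]
  have hPmono : ∀ j k, j ≤ k → P j ≤ P k := by
    intro j k hjk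
    apply Finset.sum_le_sum_of_subset_of_nonneg
    · intro s hs; simp only [Finset.mem_filter, Finset.mem_univ, true_and] at hs ⊢; omega
    · intro s _ _; exact ha0 s
  have hPA : ∀ k, P k ≤ A := by
    intro k
    rw [← haA, hP]
    apply Finset.sum_le_sum_of_subset_of_nonneg (Finset.filter_subset _ _)
      (fun s _ _ => ha0 s)
  have hex : ∃ k, A / 2 < P (k + 1) := by
    refine ⟨n - 1, ?_⟩
    have : n - 1 + 1 = n := by omega
    rw [this, hPn]; linarith
  set k₀ : ℕ := Nat.find hex with hk₀
  have hspec : A / 2 < P (k₀ + 1) := Nat.find_spec hex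
  have hk₀n : k₀ < n := by
    have : k₀ ≤ n - 1 := Nat.find_min' hex (by
      have : n - 1 + 1 = n := by omega
      rw [this, hPn]; linarith)
    omega
  have hPk₀ : P k₀ ≤ A / 2 := by
    rcases Nat.eq_zero_or_pos k₀ with h0 | h0
    · rw [h0]
      have : P 0 = 0 := by
        rw [hP]; apply Finset.sum_eq_zero; intro s hs; simp at hs
      rw [this]; linarith
    · have hmin := Nat.find_min hex (show k₀ - 1 < k₀ by omega)
      push_neg at hmin
      have : k₀ - 1 + 1 = k₀ := by omega
      rwa [this] at hmin
  set K : Fin n := ⟨k₀, hk₀n⟩ with hK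
  -- the three side lengths
  set p : ℝ := P k₀ with hp
  set q : ℝ := a K with hq
  set r : ℝ := A - P (k₀ + 1) with hr
  have hPsucc : P (k₀ + 1) = P k₀ + a K := by
    simp only [hP]
    have hins : (Finset.univ.filter fun s : Fin n => (s : ℕ) < k₀ + 1)
        = insert K (Finset.univ.filter fun s : Fin n => (s : ℕ) < k₀) := by
      ext s
      simp only [Finset.mem_filter, Finset.mem_univ, true_and, Finset.mem_insert, Fin.ext_iff, hK, Fin.val_mk]
      omega
    rw [hins, Finset.sum_insert (by simp [hK])]
    ring
  have hpqr : p + q + r = A := by rw [hp, hq, hr, hPsucc]; ring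
  have hp0 : 0 ≤ p := Finset.sum_nonneg fun s _ => ha0 s
  have hq0 : 0 ≤ q := ha0 K
  have hr0 : 0 ≤ r := by rw [hr]; linarith [hPA (k₀ + 1)]
  have htr1 : p ≤ q + r := by rw [hq, hr, hPsucc]; simp only [hp]; linarith
  have htr2 : q ≤ p + r := by
    have := key K; rw [hq, hp, hr]; linarith
  have htr3 : r ≤ p + q := by rw [hr, hPsucc, hp, hq]; linarith
  obtain ⟨e₁, e₂, e₃, he₁, he₂, he₃, hesum⟩ :=
    triangle_vectors p q r hp0 hq0 hr0 htr1 htr2 htr3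
  -- assignment of directions to legs
  set g : Fin n → Fin 3 := fun s => if (s : ℕ) < k₀ then 0 else if s = K then 1 else 2 with hg
  set e : Fin 3 → EuclideanSpace ℝ (Fin 2) := ![e₁, e₂, e₃] with he
  have heunit : ∀ j, ‖e j‖ = 1 := by
    intro j; fin_cases j <;> simpa [he]
  refine ⟨fun i => (v i).2 • e (g ((v i).1)), ?_, ?_, ?_⟩
  · intro i
    rw [norm_smul, heunit, Real.norm_eq_abs, abs_of_pos (hv i), mul_one]
  · intro i j
    show ‖(v i).2 • e (g ((v i).1)) - (v j).2 • e (g ((v j).1))‖ ≤ podDist (v i) (v j)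
    by_cases h : (v i).1 = (v j).1
    · rw [h, ← sub_smul, norm_smul, heunit, Real.norm_eq_abs, mul_one]
      simp [podDist, h]
    · have : podDist (v i) (v j) = (v i).2 + (v j).2 := by simp [podDist, h]
      rw [this]
      calc ‖(v i).2 • e (g ((v i).1)) - (v j).2 • e (g ((v j).1))‖
          ≤ ‖(v i).2 • e (g ((v i).1))‖ + ‖(v j).2 • e (g ((v j).1))‖ := norm_sub_le _ _
        _ = (v i).2 + (v j).2 := by
            rw [norm_smul, norm_smul, heunit, heunit, Real.norm_eq_abs, Real.norm_eq_abs,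
              abs_of_pos (hv i), abs_of_pos (hv j), mul_one, mul_one]
  · -- the weighted sum vanishes
    show ∑ i, t i • ((v i).2 • e (g ((v i).1))) = 0
    have step1 : ∑ i, t i • ((v i).2 • e (g ((v i).1)))
        = ∑ s : Fin n, a s • e (g s) := by
      rw [← Finset.sum_fiberwise Finset.univ (fun i => (v i).1)
        (fun i => t i • ((v i).2 • e (g ((v i).1))))]
      apply Finset.sum_congr rfl
      intro s _
      rw [ha, Finset.sum_smul]
      apply Finset.sum_congr rfl
      intro i hi
      simp only [Finset.mem_filter, Finset.mem_univ, true_and] at hi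
      rw [hi, smul_smul]
    have hfib0 : (∑ s ∈ Finset.univ.filter fun s : Fin n => g s = 0, a s) = p := by
      rw [hp, hP]
      apply Finset.sum_congr _ (fun _ _ => rfl)
      ext s
      simp only [Finset.mem_filter, Finset.mem_univ, true_and, hg]
      constructor
      · intro hgs
        by_contra hc
        rw [if_neg hc] at hgs
        split at hgs <;> exact absurd hgs (by decide)
      · intro hlt; rw [if_pos hlt]
    have hfib1 : (∑ s ∈ Finset.univ.filter fun s : Fin n => g s = 1, a s) = q := by
      rw [hq]
      have : (Finset.univ.filter fun s : Fin n => g s = 1) = {K} := by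
        ext s
        simp only [Finset.mem_filter, Finset.mem_univ, true_and, Finset.mem_singleton, hg]
        constructor
        · intro hgs
          split at hgs
          · exact absurd hgs (by decide)
          · split at hgs
            · assumption
            · exact absurd hgs (by decide)
        · intro hsK
          subst hsK
          rw [if_neg (by simp [hK]), if_pos rfl]
      rw [this, Finset.sum_singleton]
    have hfib2 : (∑ s ∈ Finset.univ.filter fun s : Fin n => g s = 2, a s) = r := by
      have htot := Finset.sum_fiberwise Finset.univ g a
      rw [haA] at htot
      have h3 : ∑ j : Fin 3, ∑ s ∈ Finset.univ.filter fun s : Fin n => g s = j, a s = A :=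
        htot
      rw [Fin.sum_univ_three, hfib0, hfib1] at h3
      linarith
    have step2 : ∑ s : Fin n, a s • e (g s) = p • e₁ + q • e₂ + r • e₃ := by
      rw [← Finset.sum_fiberwise Finset.univ g (fun s => a s • e (g s))]
      rw [Fin.sum_univ_three]
      congr 1
      · congr 1
        · rw [← hfib0, Finset.sum_smul]
          apply Finset.sum_congr rfl
          intro s hs
          simp only [Finset.mem_filter, Finset.mem_univ, true_and] at hs
          rw [hs]; simp [he]
        · rw [← hfib1, Finset.sum_smul]
          apply Finset.sum_congr rfl
          intro s hs
          simp only [Finset.mem_filter, Finset.mem_univ, true_and] at hs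
          rw [hs]; simp [he]
      · rw [← hfib2, Finset.sum_smul]
        apply Finset.sum_congr rfl
        intro s hs
        simp only [Finset.mem_filter, Finset.mem_univ, true_and] at hs
        rw [hs]; simp [he]
    rw [step1, step2, hesum]
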